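/- Let v_1,…,v_n ∈ {−1,+1}^n be pairwise orthogonal vectors (a Hadamard basis of ℝ^n), with S_i = {j : v_i(j) = +1}. Let h and g be linear set functions over n items, and let Δ ≥ 0 and C ≥ 0 be such that |(h(S_i) − h(U∖S_i)) − (g(S_i) − g(U∖S_i))| ≤ CΔ for every i ∈ {1,…,n}, |h(∅) − g(∅)| ≤ CΔ, and |h(U) − g(U)| ≤ CΔ. Then for every set S ⊆ U, |h(S) − g(S)| ≤ CΔ·(3 + √(min{|S|, n−|S|})). -/

import Mathlib

open Finset Matrix

lemma col_orth {n : ℕ} (v : Fin n → Fin n → ℝ)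
    (hpm : ∀ i j : Fin n, v i j = 1 ∨ v i j = -1)
    (horth : ∀ i i' : Fin n, i ≠ i' → ∑ j : Fin n, v i j * v i' j = 0) :
    ∀ j j' : Fin n, ∑ i, v i j * v i j' = if j = j' then (n:ℝ) else 0 := by
  have hsq : ∀ i j, v i j * v i j = 1 := fun i j => by
    rcases hpm i j with h | h <;> rw [h] <;> norm_num
  set M : Matrix (Fin n) (Fin n) ℝ := Matrix.of v with hM
  have hMMT : M * Mᵀ = (n : ℝ) • 1 := by
    ext i i'
    by_cases h : i = i'
    · subst h
      simp [Matrix.mul_apply, Matrix.transpose_apply, hM, hsq, Matrix.one_apply]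
    · simp [Matrix.mul_apply, Matrix.transpose_apply, hM, horth i i' h,
        Matrix.one_apply, h]
  have h2 : Mᵀ * M = (n : ℝ) • 1 := by
    rcases Nat.eq_zero_or_pos n with hn0 | hn
    · subst hn0; ext i; exact absurd i.2 (Nat.not_lt_zero _)
    have hn' : ((n : ℝ)) ≠ 0 := by positivity
    have hMinv : M * ((n : ℝ)⁻¹ • Mᵀ) = 1 := by
      rw [Matrix.mul_smul, hMMT, smul_smul, inv_mul_cancel₀ hn', one_smul]
    have := mul_eq_one_comm.mp hMinv
    calc Mᵀ * M = (n : ℝ) • (((n : ℝ)⁻¹ • Mᵀ) * M) := by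
          rw [Matrix.smul_mul, smul_smul, mul_inv_cancel₀ hn', one_smul]
      _ = (n : ℝ) • 1 := by rw [this]
  intro j j'
  have h3 := congrFun (congrFun h2 j) j'
  simpa [Matrix.mul_apply, Matrix.transpose_apply, hM, Matrix.one_apply,
    mul_ite, mul_one, mul_zero] using h3

lemma key_sum_bound {n : ℕ} (hn : 0 < n) (v : Fin n → Fin n → ℝ)
    (hcol : ∀ j j' : Fin n, ∑ i, v i j * v i j' = if j = j' then (n:ℝ) else 0)
    (d : Fin n → ℝ) (B : ℝ) (hB : 0 ≤ B)
    (ha : ∀ i, |∑ j, v i j * d j| ≤ B)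
    (S : Finset (Fin n)) :
    |∑ j ∈ S, d j| ≤ B * Real.sqrt S.card := by
  set a : Fin n → ℝ := fun i => ∑ j, v i j * d j with ha_def
  set b : Fin n → ℝ := fun i => ∑ j ∈ S, v i j with hb_def
  have step1 : (n:ℝ) * ∑ j ∈ S, d j = ∑ i, a i * b i := by
    have : ∀ j : Fin n, ∑ i, a i * v i j = (n:ℝ) * d j := by
      intro j
      calc ∑ i, a i * v i j = ∑ i, ∑ j', v i j' * d j' * v i j := by
            simp [ha_def, Finset.sum_mul]
        _ = ∑ j', ∑ i, v i j' * d j' * v i j := Finset.sum_comm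
        _ = ∑ j', (∑ i, v i j' * v i j) * d j' := by
            congr 1; ext j'; rw [Finset.sum_mul]; congr 1; ext i; ring
        _ = (n:ℝ) * d j := by
            rw [Finset.sum_eq_single j]
            · rw [hcol j j]; simp
            · intro j' _ hj'; rw [hcol j' j, if_neg hj', zero_mul]
            · simp
    calc (n:ℝ) * ∑ j ∈ S, d j = ∑ j ∈ S, (n:ℝ) * d j := by rw [Finset.mul_sum]
      _ = ∑ j ∈ S, ∑ i, a i * v i j := by simp_rw [this]
      _ = ∑ i, ∑ j ∈ S, a i * v i j := Finset.sum_comm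
      _ = ∑ i, a i * b i := by simp [hb_def, Finset.mul_sum]
  have step2 : ∑ i, (b i)^2 = (n:ℝ) * S.card := by
    calc ∑ i, (b i)^2 = ∑ i, ∑ j ∈ S, ∑ j' ∈ S, v i j * v i j' := by
          congr 1; ext i
          simp [hb_def, sq, Finset.sum_mul_sum]
      _ = ∑ j ∈ S, ∑ j' ∈ S, ∑ i, v i j * v i j' := by
          rw [Finset.sum_comm]; congr 1; ext j; rw [Finset.sum_comm]
      _ = ∑ j ∈ S, ∑ j' ∈ S, (if j = j' then (n:ℝ) else 0) := by simp_rw [hcol]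
      _ = ∑ j ∈ S, (n:ℝ) := by
          refine Finset.sum_congr rfl fun j hj => ?_
          rw [Finset.sum_ite_eq S j (fun _ => (n:ℝ)), if_pos hj]
      _ = (n:ℝ) * S.card := by simp [mul_comm]
  have hn' : (0:ℝ) < n := by exact_mod_cast hn
  have habs : |∑ i, a i * b i| ≤ B * ((n:ℝ) * Real.sqrt S.card) := by
    have hcs : ∑ i, (1:ℝ) * |b i| ≤
        Real.sqrt (∑ i : Fin n, (1:ℝ)^2) * Real.sqrt (∑ i, |b i|^2) :=
      Real.sum_mul_le_sqrt_mul_sqrt Finset.univ (fun _ => (1:ℝ)) (fun i => |b i|)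
    have hsq : ∑ i, |b i|^2 = (n:ℝ) * S.card := by simpa [sq_abs] using step2
    have hone : ∑ i : Fin n, (1:ℝ)^2 = (n:ℝ) := by simp
    have hprod : Real.sqrt (n:ℝ) * Real.sqrt ((n:ℝ) * S.card)
        = (n:ℝ) * Real.sqrt S.card := by
      rw [← Real.sqrt_mul (by positivity), ← mul_assoc, ← sq,
        Real.sqrt_mul (by positivity), Real.sqrt_sq hn'.le]
    have hbsum : ∑ i, |b i| ≤ (n:ℝ) * Real.sqrt S.card := by
      calc ∑ i, |b i| = ∑ i, (1:ℝ) * |b i| := by simp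
        _ ≤ _ := hcs
        _ = (n:ℝ) * Real.sqrt S.card := by rw [hone, hsq, hprod]
    calc |∑ i, a i * b i| ≤ ∑ i, |a i * b i| := Finset.abs_sum_le_sum_abs _ _
      _ = ∑ i, |a i| * |b i| := by simp [abs_mul]
      _ ≤ ∑ i, B * |b i| := Finset.sum_le_sum fun i _ =>
          mul_le_mul_of_nonneg_right (ha i) (abs_nonneg _)
      _ = B * ∑ i, |b i| := by rw [← Finset.mul_sum]
      _ ≤ B * ((n:ℝ) * Real.sqrt S.card) := mul_le_mul_of_nonneg_left hbsum hB
  have : (n:ℝ) * |∑ j ∈ S, d j| ≤ (n:ℝ) * (B * Real.sqrt S.card) := by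
    rw [← abs_of_pos hn', ← abs_mul, step1, abs_of_pos hn']
    calc |∑ i, a i * b i| ≤ B * ((n:ℝ) * Real.sqrt S.card) := habs
      _ = (n:ℝ) * (B * Real.sqrt S.card) := by ring
  exact le_of_mul_le_mul_left this hn'

/-- `f` is linear: `f(S) = c₀ + ∑_{i ∈ S} cᵢ` for some constants. -/
def IsLinear {n : ℕ} (f : Finset (Fin n) → ℝ) : Prop :=
  ∃ (c₀ : ℝ) (c : Fin n → ℝ), ∀ S : Finset (Fin n), f S = c₀ + ∑ i ∈ S, c i

/-- The set of coordinates where the vector `v i ∈ {±1}ⁿ` equals +1. -/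
noncomputable def posSet {n : ℕ} (v : Fin n → Fin n → ℝ) (i : Fin n) : Finset (Fin n) :=
  Finset.univ.filter (fun j => v i j = 1)

/-- If two linear set functions `h` and `g` are `CΔ`-close on the differences along the
Hadamard basis vectors as well as on `∅` and `U`, then they are
`CΔ(3 + √(min(|S|, n−|S|)))`-close on every set `S`. -/
theorem hadamard_closeness {n : ℕ} (hn : 0 < n)
    (v : Fin n → Fin n → ℝ)
    (hpm : ∀ i j : Fin n, v i j = 1 ∨ v i j = -1)
    (horth : ∀ i i' : Fin n, i ≠ i' → ∑ j : Fin n, v i j * v i' j = 0)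
    (h g : Finset (Fin n) → ℝ) (hh : IsLinear h) (hg : IsLinear g)
    (Δ C : ℝ) (hΔ : 0 ≤ Δ) (hC : 0 ≤ C)
    (hbasis : ∀ i : Fin n,
      |(h (posSet v i) - h (Finset.univ \ posSet v i)) -
        (g (posSet v i) - g (Finset.univ \ posSet v i))| ≤ C * Δ)
    (hempty : |h ∅ - g ∅| ≤ C * Δ)
    (hfull : |h Finset.univ - g Finset.univ| ≤ C * Δ) :
    ∀ S : Finset (Fin n),
      |h S - g S| ≤ C * Δ * (3 + Real.sqrt (min S.card (n - S.card))) := by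
  obtain ⟨hc₀, hc, hhc⟩ := hh
  obtain ⟨gc₀, gc, hgc⟩ := hg
  set d : Fin n → ℝ := fun j => hc j - gc j with hd
  have hCΔ : 0 ≤ C * Δ := mul_nonneg hC hΔ
  have hf : ∀ T : Finset (Fin n), h T - g T = (hc₀ - gc₀) + ∑ j ∈ T, d j := by
    intro T
    rw [hhc, hgc, show ∑ j ∈ T, d j = ∑ j ∈ T, hc j - ∑ j ∈ T, gc j from
      Finset.sum_sub_distrib hc gc]
    ring
  have hd₀ : |hc₀ - gc₀| ≤ C * Δ := by
    have := hempty; rw [hf ∅] at this; simpa using this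
  have hfullsum : |(hc₀ - gc₀) + ∑ j, d j| ≤ C * Δ := by
    have := hfull; rwa [hf Finset.univ] at this
  have ha : ∀ i : Fin n, |∑ j, v i j * d j| ≤ C * Δ := by
    intro i
    have hcompl : Finset.univ \ posSet v i
        = Finset.univ.filter (fun j => ¬ v i j = 1) := by
      rw [posSet, Finset.filter_not]
    have hsplit : ∑ j, v i j * d j
        = ∑ j ∈ posSet v i, d j - ∑ j ∈ Finset.univ \ posSet v i, d j := by
      rw [hcompl, ← Finset.sum_filter_add_sum_filter_not Finset.univ
        (fun j => v i j = 1) (fun j => v i j * d j)]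
      have e1 : ∑ j ∈ Finset.univ.filter (fun j => v i j = 1), v i j * d j
          = ∑ j ∈ posSet v i, d j := by
        refine Finset.sum_congr rfl fun j hj => ?_
        rw [(Finset.mem_filter.mp hj).2, one_mul]
      have e2 : ∑ j ∈ Finset.univ.filter (fun j => ¬ v i j = 1), v i j * d j
          = -∑ j ∈ Finset.univ.filter (fun j => ¬ v i j = 1), d j := by
        rw [← Finset.sum_neg_distrib]
        refine Finset.sum_congr rfl fun j hj => ?_
        have : v i j = -1 := (hpm i j).resolve_left (Finset.mem_filter.mp hj).2
        rw [this]; ring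
      rw [e1, e2, posSet]; ring
    have hb := hbasis i
    have : (h (posSet v i) - h (Finset.univ \ posSet v i)) -
        (g (posSet v i) - g (Finset.univ \ posSet v i))
        = ∑ j, v i j * d j := by
      rw [hsplit]
      have r1 := hf (posSet v i)
      have r2 := hf (Finset.univ \ posSet v i)
      linarith
    rwa [this] at hb
  have key := key_sum_bound hn v (col_orth v hpm horth) d (C * Δ) hCΔ ha
  intro S
  have bound1 : |h S - g S| ≤ C * Δ + C * Δ * Real.sqrt S.card := by
    rw [hf S]
    calc |(hc₀ - gc₀) + ∑ j ∈ S, d j| ≤ |hc₀ - gc₀| + |∑ j ∈ S, d j| :=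
        abs_add_le _ _
      _ ≤ C * Δ + C * Δ * Real.sqrt S.card := add_le_add hd₀ (key S)
  have hcard : ((Finset.univ \ S).card : ℝ) = ((n - S.card : ℕ) : ℝ) := by
    rw [Finset.card_sdiff_of_subset (Finset.subset_univ S), Finset.card_univ,
      Fintype.card_fin]
  have bound2 : |h S - g S| ≤ C * Δ + C * Δ * Real.sqrt ((n - S.card : ℕ) : ℝ) := by
    have hsd : ∑ j ∈ S, d j = ∑ j, d j - ∑ j ∈ Finset.univ \ S, d j := by
      rw [Finset.sum_sdiff_eq_sub (Finset.subset_univ S)]; ring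
    rw [hf S, hsd]
    calc |(hc₀ - gc₀) + (∑ j, d j - ∑ j ∈ Finset.univ \ S, d j)|
        = |((hc₀ - gc₀) + ∑ j, d j) + (-(∑ j ∈ Finset.univ \ S, d j))| := by
          ring_nf
      _ ≤ |(hc₀ - gc₀) + ∑ j, d j| + |-(∑ j ∈ Finset.univ \ S, d j)| :=
          abs_add_le _ _
      _ = |(hc₀ - gc₀) + ∑ j, d j| + |∑ j ∈ Finset.univ \ S, d j| := by
          rw [abs_neg]
      _ ≤ C * Δ + C * Δ * Real.sqrt ((n - S.card : ℕ) : ℝ) := by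
          have := key (Finset.univ \ S)
          rw [hcard] at this
          exact add_le_add hfullsum this
  have hSle : S.card ≤ n := by
    simpa using Finset.card_le_univ S
  have hcast : ((n - S.card : ℕ) : ℝ) = (n : ℝ) - S.card := Nat.cast_sub hSle
  rw [← hcast]
  rcases le_total ((S.card : ℝ)) (((n - S.card : ℕ)) : ℝ) with hle | hle
  · rw [min_eq_left hle]
    have hs := Real.sqrt_nonneg ((S.card : ℝ))
    nlinarith [bound1]
  · rw [min_eq_right hle]
    have hs := Real.sqrt_nonneg (((n - S.card : ℕ)) : ℝ)
    nlinarith [bound2]
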